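/- Let E(x) = (1/2) xᵀ K x + ∑_i v(x[i]) on ℝ^d, with K symmetric positive semidefinite, and v twice differentiable with −γ ≤ v''(t) ≤ δ for all t and some γ, δ > 0. Let Ḡ be a co-isometry onto a subspace on which K acts with all eigenvalues ≥ λ₀ > γ and ≤ Λ. Then for every x₁, the conditional distribution p(x̄₁ | x₁) of x̄₁ = Ḡ x given x₁ = G x (for the Gibbs density p ∝ e^{−E}) is strongly log-concave: (λ₀ − γ) Id ⪯ −∇²_{x̄₁} log p(x̄₁ | x₁) ⪯ (Λ + δ) Id. -/

import Mathlib

open Matrix MeasureTheory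

set_option maxHeartbeats 1000000 in
/-- Conditional strong log-concavity of scalar-potential Gibbs energies:
if `E(x) = (1/2)xᵀKx + ∑ᵢ v(x[i])` with `K` symmetric PSD, `-γ ≤ v'' ≤ δ`,
and `Ḡ` is a co-isometry onto a subspace where `K` acts with eigenvalues in
`[λ₀, Λ]`, `λ₀ > γ`, then for every `x₁` the conditional distribution
`p(x̄₁|x₁)` of `x̄₁ = Ḡx` given `x₁ = Gx` under `p ∝ e^{-E}` satisfies
`(λ₀-γ) Id ⪯ -∇²_{x̄₁} log p(x̄₁|x₁) ⪯ (Λ+δ) Id`, i.e. for every direction `u`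
the second directional derivative of the negative log conditional density is
between `(λ₀-γ)‖u‖²` and `(Λ+δ)‖u‖²`. -/
theorem conditional_strong_log_concavity_scalar_potential {d d₁ dbar : ℕ}
    (G : Matrix (Fin d₁) (Fin d) ℝ) (Gbar : Matrix (Fin dbar) (Fin d) ℝ)
    (horth : Gᵀ * G + Gbarᵀ * Gbar = 1) (hGGbar : G * Gbarᵀ = 0)
    (hGG : G * Gᵀ = 1) (hGbarGbar : Gbar * Gbarᵀ = 1)
    (K : Matrix (Fin d) (Fin d) ℝ) (hK : K.PosSemidef)
    (v : ℝ → ℝ) (hv : ContDiff ℝ 2 v)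
    (γ δ lam₀ Lam : ℝ) (hγ : 0 < γ) (hδ : 0 < δ) (hlam₀ : γ < lam₀)
    (hv'' : ∀ t : ℝ, -γ ≤ deriv (deriv v) t ∧ deriv (deriv v) t ≤ δ)
    (hKlow : (Gbar * K * Gbarᵀ - lam₀ • (1 : Matrix (Fin dbar) (Fin dbar) ℝ)).PosSemidef)
    (hKup : (Lam • (1 : Matrix (Fin dbar) (Fin dbar) ℝ) - Gbar * K * Gbarᵀ).PosSemidef)
    (E : (Fin d → ℝ) → ℝ)
    (hE : ∀ x, E x = (1 / 2) * (x ⬝ᵥ K.mulVec x) + ∑ i, v (x i))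
    (Z : ℝ) (hZ : 0 < Z)
    (p : (Fin d → ℝ) → ℝ) (hp : ∀ x, p x = Z⁻¹ * Real.exp (-E x))
    (m : (Fin d₁ → ℝ) → ℝ)
    (hm : ∀ x₁, m x₁ = ∫ xb : Fin dbar → ℝ, p (Gᵀ.mulVec x₁ + Gbarᵀ.mulVec xb))
    (hmpos : ∀ x₁, 0 < m x₁) :
    ∀ (x₁ : Fin d₁ → ℝ) (xb u : Fin dbar → ℝ),
      (lam₀ - γ) * (u ⬝ᵥ u)
          ≤ -(fderiv ℝ (fun yb => fderiv ℝ
                (fun zb => Real.log (p (Gᵀ.mulVec x₁ + Gbarᵀ.mulVec zb) / m x₁))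
                yb u) xb u)
        ∧ -(fderiv ℝ (fun yb => fderiv ℝ
                (fun zb => Real.log (p (Gᵀ.mulVec x₁ + Gbarᵀ.mulVec zb) / m x₁))
                yb u) xb u)
          ≤ (Lam + δ) * (u ⬝ᵥ u) := by
  intro x₁ xb u
  -- differentiability facts about v
  have hvd : Differentiable ℝ v := hv.differentiable (by norm_num)
  have hdvd : Differentiable ℝ (deriv v) := by
    have h2 : ContDiff ℝ (1+1) v := by exact_mod_cast hv
    have h1' := (contDiff_succ_iff_deriv.mp h2).2.2
    have h1 : ContDiff ℝ ((0:ℕ)+1) (deriv v) := by exact_mod_cast h1'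
    exact (contDiff_succ_iff_deriv.mp h1).1
  -- coordinates
  set a : Fin d → ℝ := Gᵀ.mulVec x₁ with ha
  set B : Matrix (Fin d) (Fin dbar) ℝ := Gbarᵀ with hB
  set X : Fin d → (Fin dbar → ℝ) → ℝ := fun i zb => a i + ∑ j, B i j * zb j with hXdef
  set w : Fin d → ℝ := fun i => ∑ j, B i j * u j with hwdef
  set L : Fin d → ((Fin dbar → ℝ) →L[ℝ] ℝ) :=
    fun i => ∑ j, B i j • (ContinuousLinearMap.proj j : (Fin dbar → ℝ) →L[ℝ] ℝ) with hLdef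
  have hL : ∀ i, (L i) u = w i := by
    intro i
    simp [hLdef, hwdef, ContinuousLinearMap.sum_apply]
  have hX : ∀ (i : Fin d) (zb : Fin dbar → ℝ), HasFDerivAt (X i) (L i) zb := by
    intro i zb
    have h : HasFDerivAt (fun t : Fin dbar → ℝ => ∑ j, B i j * t j)
        (∑ j, B i j • (ContinuousLinearMap.proj j : (Fin dbar → ℝ) →L[ℝ] ℝ)) zb :=
      HasFDerivAt.fun_sum (fun j _ => (hasFDerivAt_apply j zb).const_mul (B i j))
    exact h.const_add (a i)
  have hxcoord : ∀ zb : Fin dbar → ℝ,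
      Gᵀ.mulVec x₁ + Gbarᵀ.mulVec zb = fun i => X i zb := by
    intro zb; funext i
    simp [hXdef, ha, hB, Matrix.mulVec, dotProduct]
  set Fexp : (Fin dbar → ℝ) → ℝ :=
    fun zb => 1/2 * (∑ i, X i zb * ∑ j, K i j * X j zb) + ∑ i, v (X i zb) with hFdef
  have hFeq : ∀ zb : Fin dbar → ℝ, E (Gᵀ.mulVec x₁ + Gbarᵀ.mulVec zb) = Fexp zb := by
    intro zb
    rw [hxcoord zb, hE]
    simp [hFdef, Matrix.mulVec, dotProduct]
  set C : ℝ := -(Real.log Z) - Real.log (m x₁) with hCdef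
  have hgeq : (fun zb => Real.log (p (Gᵀ.mulVec x₁ + Gbarᵀ.mulVec zb) / m x₁))
      = fun zb => C - Fexp zb := by
    funext zb
    rw [hp, Real.log_div (by positivity) (ne_of_gt (hmpos x₁)),
      Real.log_mul (inv_ne_zero (ne_of_gt hZ)) (Real.exp_ne_zero _),
      Real.log_exp, Real.log_inv, hFeq zb, hCdef]
    ring
  -- first derivative
  set φdir : (Fin dbar → ℝ) → ℝ := fun yb =>
      1/2 * (∑ i, (X i yb * (∑ j, K i j * w j) + (∑ j, K i j * X j yb) * w i))
        + ∑ i, deriv v (X i yb) * w i with hφdef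
  have hFder : ∀ yb : Fin dbar → ℝ, HasFDerivAt Fexp
      ((1/2 : ℝ) • (∑ i, (X i yb • (∑ j, K i j • L j) + (∑ j, K i j * X j yb) • L i))
        + ∑ i, deriv v (X i yb) • L i) yb := by
    intro yb
    have h1 : ∀ i, HasFDerivAt (fun zb => ∑ j, K i j * X j zb) (∑ j, K i j • L j) yb :=
      fun i => HasFDerivAt.fun_sum (fun j _ => (hX j yb).const_mul (K i j))
    have h3 : HasFDerivAt (fun zb => ∑ i, X i zb * ∑ j, K i j * X j zb)
        (∑ i, (X i yb • (∑ j, K i j • L j) + (∑ j, K i j * X j yb) • L i)) yb :=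
      HasFDerivAt.fun_sum (fun i _ => (hX i yb).mul (h1 i))
    have h5 : ∀ i, HasFDerivAt (fun zb => v (X i zb)) (deriv v (X i yb) • L i) yb :=
      fun i => ((hvd (X i yb)).hasDerivAt).comp_hasFDerivAt yb (hX i yb)
    exact (h3.const_mul (1/2 : ℝ)).add (HasFDerivAt.fun_sum fun i _ => h5 i)
  have hfd1 : ∀ yb : Fin dbar → ℝ,
      fderiv ℝ (fun zb => C - Fexp zb) yb u = -(φdir yb) := by
    intro yb
    rw [((hFder yb).const_sub C).fderiv]
    simp only [ContinuousLinearMap.neg_apply, ContinuousLinearMap.add_apply,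
      ContinuousLinearMap.smul_apply, ContinuousLinearMap.sum_apply, hL, smul_eq_mul, hφdef]
  rw [hgeq]
  have hfun : (fun yb => fderiv ℝ (fun zb => C - Fexp zb) yb u) = fun yb => -(φdir yb) :=
    funext hfd1
  rw [hfun, fderiv_fun_neg]
  -- second derivative
  have hφder : HasFDerivAt φdir
      ((1/2 : ℝ) • (∑ i, ((∑ j, K i j * w j) • L i + w i • (∑ j, K i j • L j)))
        + ∑ i, (w i • (deriv (deriv v) (X i xb) • L i))) xb := by
    have h1 : ∀ i, HasFDerivAt (fun zb => ∑ j, K i j * X j zb) (∑ j, K i j • L j) xb :=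
      fun i => HasFDerivAt.fun_sum (fun j _ => (hX j xb).const_mul (K i j))
    have h2 : ∀ i, HasFDerivAt
        (fun yb => X i yb * (∑ j, K i j * w j) + (∑ j, K i j * X j yb) * w i)
        ((∑ j, K i j * w j) • L i + w i • (∑ j, K i j • L j)) xb :=
      fun i => ((hX i xb).mul_const _).add ((h1 i).mul_const (w i))
    have h3 : ∀ i, HasFDerivAt (fun yb => deriv v (X i yb) * w i)
        (w i • (deriv (deriv v) (X i xb) • L i)) xb :=
      fun i => (((hdvd (X i xb)).hasDerivAt).comp_hasFDerivAt xb (hX i xb)).mul_const (w i)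
    exact ((HasFDerivAt.fun_sum (fun i _ => h2 i)).const_mul (1/2 : ℝ)).add
      (HasFDerivAt.fun_sum fun i _ => h3 i)
  have hsec : fderiv ℝ φdir xb u
      = (∑ i, w i * ∑ j, K i j * w j) + ∑ i, deriv (deriv v) (X i xb) * (w i * w i) := by
    rw [hφder.fderiv]
    simp only [ContinuousLinearMap.add_apply, ContinuousLinearMap.smul_apply,
      ContinuousLinearMap.sum_apply, hL, smul_eq_mul]
    have e1 : (1:ℝ)/2 * ∑ i, ((∑ j, K i j * w j) * w i + w i * ∑ j, K i j * w j)
        = ∑ i, w i * ∑ j, K i j * w j := by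
      rw [Finset.mul_sum]
      exact Finset.sum_congr rfl fun i _ => by ring
    have e2 : ∑ i, w i * (deriv (deriv v) (X i xb) * w i)
        = ∑ i, deriv (deriv v) (X i xb) * (w i * w i) :=
      Finset.sum_congr rfl fun i _ => by ring
    rw [e1, e2]
  -- matrix identities
  have hQ : (∑ i, w i * ∑ j, K i j * w j) = u ⬝ᵥ (Gbar * K * B).mulVec u := by
    have h0 : (∑ i, w i * ∑ j, K i j * w j) = (B.mulVec u) ⬝ᵥ K.mulVec (B.mulVec u) := by
      simp [hwdef, Matrix.mulVec, dotProduct]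
    rw [h0, hB, Matrix.mulVec_mulVec, Matrix.mulVec_transpose, ← Matrix.dotProduct_mulVec,
      Matrix.mulVec_mulVec, ← Matrix.mul_assoc]
  have hNorm : (∑ i, w i * w i) = u ⬝ᵥ u := by
    have h0 : (∑ i, w i * w i) = (B.mulVec u) ⬝ᵥ (B.mulVec u) := by
      simp [hwdef, Matrix.mulVec, dotProduct]
    rw [h0, hB, Matrix.dotProduct_mulVec, Matrix.vecMul_transpose, Matrix.mulVec_mulVec,
      ← hB, hGbarGbar, Matrix.one_mulVec]
  have hlow := hKlow.dotProduct_mulVec_nonneg u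
  have hup := hKup.dotProduct_mulVec_nonneg u
  simp only [star_trivial, Matrix.sub_mulVec, Matrix.smul_mulVec, Matrix.one_mulVec,
    dotProduct_sub, dotProduct_smul, smul_eq_mul] at hlow hup
  have hQlow : lam₀ * (u ⬝ᵥ u) ≤ ∑ i, w i * ∑ j, K i j * w j := by rw [hQ]; linarith
  have hQup : (∑ i, w i * ∑ j, K i j * w j) ≤ Lam * (u ⬝ᵥ u) := by rw [hQ]; linarith
  have hSlow : -γ * (u ⬝ᵥ u) ≤ ∑ i, deriv (deriv v) (X i xb) * (w i * w i) := by
    rw [← hNorm, Finset.mul_sum]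
    exact Finset.sum_le_sum fun i _ =>
      mul_le_mul_of_nonneg_right (hv'' (X i xb)).1 (mul_self_nonneg (w i))
  have hSup : (∑ i, deriv (deriv v) (X i xb) * (w i * w i)) ≤ δ * (u ⬝ᵥ u) := by
    rw [← hNorm, Finset.mul_sum]
    exact Finset.sum_le_sum fun i _ =>
      mul_le_mul_of_nonneg_right (hv'' (X i xb)).2 (mul_self_nonneg (w i))
  simp only [ContinuousLinearMap.neg_apply, neg_neg]
  rw [hsec]
  have he1 : (lam₀ - γ) * (u ⬝ᵥ u) = lam₀ * (u ⬝ᵥ u) + -γ * (u ⬝ᵥ u) := by ring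
  have he2 : (Lam + δ) * (u ⬝ᵥ u) = Lam * (u ⬝ᵥ u) + δ * (u ⬝ᵥ u) := by ring
  constructor
  · rw [he1]; exact add_le_add hQlow hSlow
  · rw [he2]; exact add_le_add hQup hSup
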